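/- Let h: ℕ→ℕ be a strictly increasing function and α, β < ε₀ be ordinals such that α + β = α ⊕ β (where ⊕ denotes the natural, or Hessenberg, sum; equivalently, the concatenation of the Cantor normal forms of α and β is itself a Cantor normal form). Then for all x ∈ ℕ, h^{α+β}(x) = h^α(h^β(x)). -/

import Mathlib

open ONote Ordinal
/-- Natural (Hessenberg) addition of ordinals, as formerly in Mathlib (`Ordinal.nadd`). -/
noncomputable def Ordinal.nadd : Ordinal.{u} → Ordinal.{u} → Ordinal.{u}
  | a, b =>
    max (blsub.{u, u} a fun a' _ => Ordinal.nadd a' b) (blsub.{u, u} b fun b' _ => Ordinal.nadd a b')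
termination_by o₁ o₂ => (o₁, o₂)

infixl:65 " ♯ " => Ordinal.nadd

namespace Ordinal

theorem nadd_def (a b : Ordinal.{u}) : a ♯ b =
    max (blsub.{u, u} a fun a' _ => a' ♯ b) (blsub.{u, u} b fun b' _ => a ♯ b') := by
  rw [Ordinal.nadd]

theorem lt_nadd_iff {a b c : Ordinal.{u}} :
    a < b ♯ c ↔ (∃ b' < b, a ≤ b' ♯ c) ∨ ∃ c' < c, a ≤ b ♯ c' := by
  rw [nadd_def]
  simp [lt_blsub_iff]

theorem nadd_le_iff {a b c : Ordinal.{u}} :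
    b ♯ c ≤ a ↔ (∀ b' < b, b' ♯ c < a) ∧ ∀ c' < c, b ♯ c' < a := by
  rw [nadd_def]
  simp [blsub_le_iff]

theorem nadd_lt_nadd_left {b c : Ordinal.{u}} (h : b < c) (a : Ordinal.{u}) : a ♯ b < a ♯ c :=
  lt_nadd_iff.2 (Or.inr ⟨b, h, le_rfl⟩)

theorem nadd_lt_nadd_right {b c : Ordinal.{u}} (h : b < c) (a : Ordinal.{u}) : b ♯ a < c ♯ a :=
  lt_nadd_iff.2 (Or.inl ⟨b, h, le_rfl⟩)

theorem nadd_le_nadd_left {b c : Ordinal.{u}} (h : b ≤ c) (a : Ordinal.{u}) : a ♯ b ≤ a ♯ c := by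
  rcases lt_or_eq_of_le h with h | rfl
  · exact (nadd_lt_nadd_left h a).le
  · exact le_rfl

theorem nadd_le_nadd_right {b c : Ordinal.{u}} (h : b ≤ c) (a : Ordinal.{u}) : b ♯ a ≤ c ♯ a := by
  rcases lt_or_eq_of_le h with h | rfl
  · exact (nadd_lt_nadd_right h a).le
  · exact le_rfl

theorem nadd_comm : ∀ a b : Ordinal.{u}, a ♯ b = b ♯ a := by
  intro a
  induction a using Ordinal.induction with
  | h a IHa =>
  intro b
  induction b using Ordinal.induction with
  | h b IHb =>
  apply le_antisymm
  · refine nadd_le_iff.2 ⟨fun a' ha' => ?_, fun b' hb' => ?_⟩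
    · rw [IHa a' ha']; exact nadd_lt_nadd_left ha' b
    · rw [IHb b' hb']; exact nadd_lt_nadd_right hb' a
  · refine nadd_le_iff.2 ⟨fun b' hb' => ?_, fun a' ha' => ?_⟩
    · rw [← IHb b' hb']; exact nadd_lt_nadd_left hb' a
    · rw [← IHa a' ha']; exact nadd_lt_nadd_right ha' b

theorem nadd_zero : ∀ a : Ordinal.{u}, a ♯ 0 = a := by
  intro a
  induction a using Ordinal.induction with
  | h a IH =>
  apply le_antisymm
  · refine nadd_le_iff.2 ⟨fun a' ha' => ?_, fun c hc => absurd hc (zero_le (a := c)).not_gt⟩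
    rw [IH a' ha']; exact ha'
  · refine le_of_forall_lt fun d hd => ?_
    rw [← IH d hd]; exact nadd_lt_nadd_right hd 0

theorem zero_nadd (a : Ordinal.{u}) : 0 ♯ a = a := by
  rw [nadd_comm, nadd_zero]

theorem le_nadd_self {a b : Ordinal.{u}} : a ≤ a ♯ b := by
  calc a = a ♯ 0 := (nadd_zero a).symm
    _ ≤ a ♯ b := nadd_le_nadd_left (zero_le (a := b)) a

theorem add_le_nadd : ∀ a b : Ordinal.{u}, a + b ≤ a ♯ b := by
  intro a b
  induction b using Ordinal.induction with
  | h b IH =>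
  refine le_of_forall_lt fun d hd => ?_
  rcases lt_or_ge d a with hda | had
  · exact lt_of_lt_of_le hda le_nadd_self
  · have he : a + (d - a) = d := Ordinal.add_sub_cancel_of_le had
    have hlt : d - a < b := by
      rw [← he] at hd; exact (add_lt_add_iff_left a).1 hd
    rw [← he]
    exact lt_of_le_of_lt (IH _ hlt) (nadd_lt_nadd_left hlt a)

theorem nadd_assoc : ∀ a b c : Ordinal.{u}, a ♯ b ♯ c = a ♯ (b ♯ c) := by
  intro a
  induction a using Ordinal.induction with
  | h a IHa =>
  intro b
  induction b using Ordinal.induction with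
  | h b IHb =>
  intro c
  induction c using Ordinal.induction with
  | h c IHc =>
  apply le_antisymm
  · refine nadd_le_iff.2 ⟨fun d hd => ?_, fun c' hc' => ?_⟩
    · rcases lt_nadd_iff.1 hd with ⟨a', ha', hle⟩ | ⟨b', hb', hle⟩
      · calc d ♯ c ≤ a' ♯ b ♯ c := nadd_le_nadd_right hle c
          _ = a' ♯ (b ♯ c) := IHa a' ha' b c
          _ < a ♯ (b ♯ c) := nadd_lt_nadd_right ha' _
      · calc d ♯ c ≤ a ♯ b' ♯ c := nadd_le_nadd_right hle c
          _ = a ♯ (b' ♯ c) := IHb b' hb' c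
          _ < a ♯ (b ♯ c) := nadd_lt_nadd_left (nadd_lt_nadd_right hb' c) a
    · rw [IHc c' hc']
      exact nadd_lt_nadd_left (nadd_lt_nadd_left hc' b) a
  · refine nadd_le_iff.2 ⟨fun a' ha' => ?_, fun d hd => ?_⟩
    · rw [← IHa a' ha' b c]
      exact nadd_lt_nadd_right (nadd_lt_nadd_right ha' b) c
    · rcases lt_nadd_iff.1 hd with ⟨b', hb', hle⟩ | ⟨c', hc', hle⟩
      · calc a ♯ d ≤ a ♯ (b' ♯ c) := nadd_le_nadd_left hle a
          _ = a ♯ b' ♯ c := (IHb b' hb' c).symm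
          _ < a ♯ b ♯ c := nadd_lt_nadd_right (nadd_lt_nadd_left hb' a) c
      · calc a ♯ d ≤ a ♯ (b ♯ c') := nadd_le_nadd_left hle a
          _ = a ♯ b ♯ c' := (IHc c' hc').symm
          _ < a ♯ b ♯ c := nadd_lt_nadd_left hc' _

end Ordinal

-- (u+v) ♯ w ≤ u ♯ (v ♯ w)
theorem add_nadd_le_nadd_nadd (u v w : Ordinal) : (u + v) ♯ w ≤ u ♯ (v ♯ w) := by
  calc (u + v) ♯ w ≤ (u ♯ v) ♯ w := nadd_le_nadd_right (add_le_nadd _ _) w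
  _ = u ♯ (v ♯ w) := nadd_assoc _ _ _

-- Gfin
theorem nadd_omega0_opow_mul_nat (x : Ordinal)
    (hP : ∀ a b, a < ω ^ x → b < ω ^ x → a ♯ b < ω ^ x) :
    ∀ (n : ℕ) (u : Ordinal), u < ω ^ x → ω ^ x * n ♯ u = ω ^ x * n + u := by
  intro n
  induction n using Nat.strong_induction_on with
  | _ n IHn =>
  intro u
  induction u using Ordinal.induction with
  | h u IHu =>
  intro hu
  refine le_antisymm (nadd_le_iff.2 ⟨?_, ?_⟩) (add_le_nadd _ _)
  · intro a' ha'
    have hx0 : (ω ^ x : Ordinal) ≠ 0 := (opow_pos x omega0_pos).ne'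
    have hd : ω ^ x * (a' / ω ^ x) + a' % ω ^ x = a' := Ordinal.div_add_mod _ _
    have hq : a' / ω ^ x < (n : Ordinal) := (Ordinal.div_lt hx0).2 ha'
    obtain ⟨q, hq'⟩ := Ordinal.lt_omega0.1 (hq.trans (nat_lt_omega0 n))
    have hqn : q < n := by
      rw [hq'] at hq; exact_mod_cast hq
    have hr : a' % ω ^ x < ω ^ x := Ordinal.mod_lt a' hx0
    have hru : a' % ω ^ x ♯ u < ω ^ x := hP _ _ hr hu
    calc a' ♯ u = (ω ^ x * q + a' % ω ^ x) ♯ u := by rw [← hq', hd]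
      _ ≤ ω ^ x * q ♯ (a' % ω ^ x ♯ u) := add_nadd_le_nadd_nadd _ _ _
      _ = ω ^ x * q + (a' % ω ^ x ♯ u) := IHn q hqn _ hru
      _ < ω ^ x * q + ω ^ x := by exact (add_lt_add_iff_left _).2 hru
      _ = ω ^ x * (q + 1) := by rw [mul_add, mul_one]
      _ ≤ ω ^ x * n := by
          apply mul_le_mul_right
          exact_mod_cast Nat.cast_le.2 hqn
      _ ≤ ω ^ x * n + u := le_self_add
  · intro u' hu'
    rw [IHu u' hu' (hu'.trans hu)]
    exact (add_lt_add_iff_left _).2 hu'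

-- MASTER
theorem nadd_omega0_opow_mul (x : Ordinal)
    (hP : ∀ a b, a < ω ^ x → b < ω ^ x → a ♯ b < ω ^ x) :
    ∀ (p : Ordinal) (n : ℕ) (v : Ordinal), v < ω ^ x →
      ω ^ x * p ♯ (ω ^ x * n + v) = ω ^ x * (p + n) + v := by
  have hx0 : (ω ^ x : Ordinal) ≠ 0 := (opow_pos x omega0_pos).ne'
  intro p
  induction p using Ordinal.induction with
  | h p IHp =>
  intro n
  induction n using Nat.strong_induction_on with
  | _ n IHn =>
  intro v
  induction v using Ordinal.induction with
  | h v IHv =>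
  intro hv
  refine le_antisymm (nadd_le_iff.2 ⟨?_, ?_⟩) ?_
  · -- a' < ω^x * p
    intro a' ha'
    have hd : ω ^ x * (a' / ω ^ x) + a' % ω ^ x = a' := Ordinal.div_add_mod _ _
    have hq : a' / ω ^ x < p := (Ordinal.div_lt hx0).2 ha'
    set q := a' / ω ^ x with hqdef
    have hr : a' % ω ^ x < ω ^ x := Ordinal.mod_lt a' hx0
    have hvr : v ♯ a' % ω ^ x < ω ^ x := hP _ _ hv hr
    have step1 : (ω ^ x * n + v) ♯ a' % ω ^ x ≤ ω ^ x * n + (v ♯ a' % ω ^ x) := by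
      calc (ω ^ x * n + v) ♯ a' % ω ^ x ≤ ω ^ x * n ♯ (v ♯ a' % ω ^ x) :=
            add_nadd_le_nadd_nadd _ _ _
        _ = ω ^ x * n + (v ♯ a' % ω ^ x) := nadd_omega0_opow_mul_nat x hP n _ hvr
    calc a' ♯ (ω ^ x * n + v) = (ω ^ x * q + a' % ω ^ x) ♯ (ω ^ x * n + v) := by rw [hd]
      _ ≤ ω ^ x * q ♯ (a' % ω ^ x ♯ (ω ^ x * n + v)) := add_nadd_le_nadd_nadd _ _ _
      _ = ω ^ x * q ♯ ((ω ^ x * n + v) ♯ a' % ω ^ x) := by rw [nadd_comm (a' % ω ^ x)]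
      _ ≤ ω ^ x * q ♯ (ω ^ x * n + (v ♯ a' % ω ^ x)) := nadd_le_nadd_left step1 _
      _ = ω ^ x * (q + n) + (v ♯ a' % ω ^ x) := IHp q hq n _ hvr
      _ < ω ^ x * (q + n) + ω ^ x := (add_lt_add_iff_left _).2 hvr
      _ = ω ^ x * (q + n + 1) := by
            rw [mul_add (ω ^ x) (q + n) 1, mul_one, mul_add]
      _ = ω ^ x * (q + 1 + n) := by
            have : ((n : Ordinal) + 1) = 1 + (n : Ordinal) := by norm_cast; omega
            rw [add_assoc, add_assoc, this]
      _ ≤ ω ^ x * (p + n) := by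
          apply mul_le_mul_right
          exact add_le_add_left (Order.succ_le_of_lt hq) _
      _ ≤ ω ^ x * (p + n) + v := le_self_add
  · -- w' < ω^x * n + v
    intro w' hw'
    have hd : ω ^ x * (w' / ω ^ x) + w' % ω ^ x = w' := Ordinal.div_add_mod _ _
    have hr : w' % ω ^ x < ω ^ x := Ordinal.mod_lt w' hx0
    have hwn : w' < ω ^ x * (n + 1) := by
      calc w' < ω ^ x * n + v := hw'
        _ < ω ^ x * n + ω ^ x := (add_lt_add_iff_left _).2 hv
        _ = ω ^ x * (n + 1) := by rw [mul_add, mul_one]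
    have hq : w' / ω ^ x < (n : Ordinal) + 1 := by
      apply (Ordinal.div_lt hx0).2
      exact_mod_cast hwn
    obtain ⟨q, hq'⟩ := Ordinal.lt_omega0.1 (hq.trans_le (le_of_lt (nat_lt_omega0 (n + 1))))
    have hqn : q ≤ n := by
      rw [hq'] at hq
      exact_mod_cast Order.lt_succ_iff.1 (by exact_mod_cast hq)
    rcases lt_or_eq_of_le hqn with hlt | rfl
    · have := IHn q hlt (w' % ω ^ x) hr
      calc ω ^ x * p ♯ w' = ω ^ x * p ♯ (ω ^ x * q + w' % ω ^ x) := by rw [← hq', hd]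
        _ = ω ^ x * (p + q) + w' % ω ^ x := this
        _ < ω ^ x * (p + q) + ω ^ x := (add_lt_add_iff_left _).2 hr
        _ = ω ^ x * (p + q + 1) := by
            rw [mul_add (ω ^ x) (p + q) 1, mul_one, mul_add]
        _ ≤ ω ^ x * (p + n) := by
            apply mul_le_mul_right
            rw [add_assoc]
            apply add_le_add_right
            exact_mod_cast Nat.succ_le_of_lt hlt
        _ ≤ ω ^ x * (p + n) + v := le_self_add
    · have hrv : w' % ω ^ x < v := by
        have : ω ^ x * q + w' % ω ^ x < ω ^ x * q + v := by
          rw [hq'] at hd; rw [hd]; exact hw'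
        exact (add_lt_add_iff_left _).1 this
      calc ω ^ x * p ♯ w' = ω ^ x * p ♯ (ω ^ x * q + w' % ω ^ x) := by rw [← hq', hd]
        _ = ω ^ x * (p + q) + w' % ω ^ x := IHv _ hrv (hrv.trans hv)
        _ < ω ^ x * (p + q) + v := (add_lt_add_iff_left _).2 hrv
  · rw [mul_add, add_assoc]
    exact add_le_nadd _ _

-- principality of ω^x under natural addition
theorem nadd_principal_aux : ∀ x : Ordinal, ∀ a b, a < ω ^ x → b < ω ^ x → a ♯ b < ω ^ x := by
  intro x
  induction x using Ordinal.induction with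
  | h x IH =>
  intro a b ha hb
  rcases eq_or_ne a 0 with rfl | ha0
  · rwa [zero_nadd]
  rcases eq_or_ne b 0 with rfl | hb0
  · rwa [nadd_zero]
  have hx0 : x ≠ 0 := by
    rintro rfl
    rw [opow_zero, Ordinal.lt_one_iff_zero] at ha
    exact ha0 ha
  set z := max (Ordinal.log ω a) (Ordinal.log ω b) with hz
  have hzx : z < x := by
    apply max_lt
    · exact (Ordinal.lt_opow_iff_log_lt one_lt_omega0 ha0).1 ha
    · exact (Ordinal.lt_opow_iff_log_lt one_lt_omega0 hb0).1 hb
  have hsa : a < ω ^ Order.succ z := by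
    refine (Ordinal.lt_opow_succ_log_self one_lt_omega0 a).trans_le ?_
    exact opow_le_opow_right omega0_pos (Order.succ_le_succ (le_max_left _ _))
  have hsb : b < ω ^ Order.succ z := by
    refine (Ordinal.lt_opow_succ_log_self one_lt_omega0 b).trans_le ?_
    exact opow_le_opow_right omega0_pos (Order.succ_le_succ (le_max_right _ _))
  rw [opow_succ] at hsa hsb
  obtain ⟨m', hm', ham⟩ := (Ordinal.lt_mul_iff_of_isSuccLimit isSuccLimit_omega0).1 hsa
  obtain ⟨n', hn', hbn⟩ := (Ordinal.lt_mul_iff_of_isSuccLimit isSuccLimit_omega0).1 hsb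
  obtain ⟨m, rfl⟩ := Ordinal.lt_omega0.1 hm'
  obtain ⟨n, rfl⟩ := Ordinal.lt_omega0.1 hn'
  have key : ω ^ z * m ♯ ω ^ z * n = ω ^ z * (m + n : ℕ) := by
    have := nadd_omega0_opow_mul z (IH z hzx) (m : Ordinal) n 0 (opow_pos z omega0_pos)
    rw [add_zero, add_zero] at this
    rw [this]
    norm_cast
  calc a ♯ b < ω ^ z * m ♯ b := nadd_lt_nadd_right ham b
    _ < ω ^ z * m ♯ ω ^ z * n := nadd_lt_nadd_left hbn _
    _ = ω ^ z * (m + n : ℕ) := key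
    _ < ω ^ z * ω := mul_lt_mul_of_pos_left
        (nat_lt_omega0 (m + n)) (opow_pos z omega0_pos)
    _ = ω ^ Order.succ z := (opow_succ ω z).symm
    _ ≤ ω ^ x := opow_le_opow_right omega0_pos (Order.succ_le_of_lt hzx)

theorem add_eq_nadd_of_lt_omega0_opow_mul (x p c : Ordinal) (hc : c < ω ^ x * ω) :
    ω ^ x * p + c = ω ^ x * p ♯ c := by
  have hx0 : (ω ^ x : Ordinal) ≠ 0 := (opow_pos x omega0_pos).ne'
  have hd : ω ^ x * (c / ω ^ x) + c % ω ^ x = c := Ordinal.div_add_mod _ _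
  have hq : c / ω ^ x < ω := (Ordinal.div_lt hx0).2 hc
  obtain ⟨n, hn⟩ := Ordinal.lt_omega0.1 hq
  have hr : c % ω ^ x < ω ^ x := Ordinal.mod_lt c hx0
  rw [← hd, hn, nadd_omega0_opow_mul x (nadd_principal_aux x) p n _ hr, mul_add, add_assoc]

theorem lt_of_add_eq_nadd {A B : Ordinal} (x p : Ordinal) (hA : A = ω ^ x * Order.succ p)
    (hnat : A + B = A ♯ B) : B < ω ^ x * ω := by
  by_contra hge
  rw [not_lt] at hge
  have habs : (ω ^ x : Ordinal) + B = B := by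
    refine Ordinal.add_absorp ((Ordinal.opow_lt_opow_iff_right one_lt_omega0).2
      (Order.lt_succ x)) ?_
    rwa [opow_succ]
  have h1 : A + B = ω ^ x * p + B := by
    rw [hA, Order.succ_eq_add_one, mul_add, mul_one, add_assoc, habs]
  have hlt : ω ^ x * p < A := by
    rw [hA]
    exact mul_lt_mul_of_pos_left (Order.lt_succ p) (opow_pos x omega0_pos)
  have h2 : ω ^ x * p + B < A ♯ B :=
    lt_of_le_of_lt (add_le_nadd _ _) (nadd_lt_nadd_right hlt B)
  rw [← h1, hnat] at h2
  exact lt_irrefl _ h2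

/-- Downward propagation of the `add = nadd` condition. -/
theorem nadd_eq_add_down {A B c : Ordinal} (x p : Ordinal) (hA : A = ω ^ x * Order.succ p)
    (hnat : A + B = A ♯ B) (hc : c ≤ B) : A + c = A ♯ c := by
  rw [hA]
  exact add_eq_nadd_of_lt_omega0_opow_mul x _ c
    (lt_of_le_of_lt hc (lt_of_add_eq_nadd x p hA hnat))

namespace ONote

/-- Computation of `repr (oadd e n a)` from a factored form of `repr a`. -/
theorem lift_decomp (e : ONote) (n : ℕ+) (a : ONote) {x q : Ordinal}
    (h : repr a = ω ^ x * Order.succ q) (hx : x < repr e) :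
    repr (oadd e n a) = ω ^ x * Order.succ (ω ^ (repr e - x) * n + q) := by
  have he : repr e = x + (repr e - x) := (Ordinal.add_sub_cancel_of_le hx.le).symm
  have key : (ω : Ordinal) ^ repr e = ω ^ x * ω ^ (repr e - x) := by
    rw [← opow_add, ← he]
  show ω ^ repr e * n + repr a = _
  rw [key, h, mul_assoc, ← mul_add, Ordinal.add_succ]

/-- Every nonzero `NF` ordinal notation factors as `ω ^ x * (p + 1)` where `x` is its
smallest exponent. -/
theorem exists_decomp : ∀ α : ONote, NF α → α ≠ 0 →
    ∃ x p, repr α = ω ^ x * Order.succ p ∧ ∀ b, NFBelow α b → x < b := by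
  intro α
  induction α with
  | zero => intro _ h; exact absurd rfl h
  | oadd e n a _ IHa =>
    intro h _
    rcases eq_or_ne a 0 with rfl | ha0
    · refine ⟨repr e, ((n : ℕ) - 1 : ℕ), ?_, fun b hb => hb.lt⟩
      show ω ^ repr e * n + repr (0 : ONote) = _
      have : ((n : ℕ) : Ordinal) = Order.succ (((n : ℕ) - 1 : ℕ) : Ordinal) := by
        rw [Order.succ_eq_add_one]
        exact_mod_cast (Nat.succ_pred_eq_of_pos n.2).symm
      rw [show repr (0 : ONote) = 0 from rfl, add_zero, this]
    · obtain ⟨x, q, hq, hbound⟩ := IHa h.snd ha0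
      have hx : x < repr e := hbound _ h.snd'
      exact ⟨x, _, lift_decomp e n a hq hx, fun b hb => hx.trans hb.lt⟩

/-- Under the `add = nadd` hypothesis, `repr β` is bounded by `ω ^ b` for any
`NFBelow` bound `b` of `α`. -/
theorem repr_lt_of_nadd_eq_add {α β : ONote} (hα : NF α) (hα0 : α ≠ 0)
    (hnat : repr α + repr β = repr α ♯ repr β) {b : Ordinal} (hb : NFBelow α b) :
    repr β < ω ^ b := by
  obtain ⟨x, p, hx, hbound⟩ := exists_decomp α hα hα0
  have h1 : repr β < ω ^ x * ω := lt_of_add_eq_nadd x p hx hnat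
  rw [← opow_succ] at h1
  exact h1.trans_le (opow_le_opow_right omega0_pos (Order.succ_le_of_lt (hbound _ hb)))

/-- `add = nadd` propagates from `oadd e n a` to the tail `a`, and bounds `β` below
`ω ^ repr e`. -/
theorem tail_facts {e : ONote} {n : ℕ+} {a β : ONote} (h : NF (oadd e n a)) (ha0 : a ≠ 0)
    (hnat : repr (oadd e n a) + repr β = repr (oadd e n a) ♯ repr β) :
    (repr a + repr β = repr a ♯ repr β) ∧ repr β < ω ^ repr e := by
  obtain ⟨x, q, hq, hbound⟩ := exists_decomp a h.snd ha0
  have hx : x < repr e := hbound _ h.snd'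
  have hβ : repr β < ω ^ x * ω :=
    lt_of_add_eq_nadd x _ (lift_decomp e n a hq hx) hnat
  constructor
  · rw [hq]
    exact add_eq_nadd_of_lt_omega0_opow_mul x _ _ hβ
  · rw [← opow_succ] at hβ
    exact hβ.trans_le (opow_le_opow_right omega0_pos (Order.succ_le_of_lt hx))

/-- Downward propagation of `add = nadd` for ordinal notations. -/
theorem nadd_eq_add_down' {α : ONote} (hα : NF α) {B c : Ordinal}
    (hnat : repr α + B = repr α ♯ B) (hc : c ≤ B) : repr α + c = repr α ♯ c := by
  rcases eq_or_ne α 0 with rfl | h0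
  · show repr (0 : ONote) + c = _
    simp [zero_nadd]
  · obtain ⟨x, p, hx, -⟩ := exists_decomp α hα h0
    exact nadd_eq_add_down x p hx hnat hc

end ONote

namespace ONote

theorem cmp_self_eq {e : ONote} (he : NF e) : ONote.cmp e e = Ordering.eq := by
  have h := @cmp_compares e e he he
  cases hc : ONote.cmp e e <;> rw [hc] at h
  all_goals exact absurd h (lt_irrefl e)

theorem addAux_eq_oadd {e : ONote} (he : NF e) (n : ℕ+) {o : ONote}
    (ho : NFBelow o (repr e)) : addAux e n o = oadd e n o := by
  cases o with
  | zero => rfl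
  | oadd e' n' a' =>
    have he' : NF e' := ho.fst
    have hlt : repr e' < repr e := ho.lt
    have h := @cmp_compares e e' he he'
    cases hc : ONote.cmp e e' <;> rw [hc] at h
    case lt => exact absurd (lt_def.1 h) (asymm hlt)
    case eq => rw [h] at hlt; exact absurd hlt (lt_irrefl _)
    case gt => simp only [addAux, hc]

theorem add_zero_nf : ∀ {α : ONote}, NF α → α + 0 = α := by
  intro α
  induction α with
  | zero => intro _; rfl
  | oadd e n a _ IHa =>
    intro h
    rw [oadd_add, IHa h.snd]
    exact addAux_eq_oadd h.fst n h.snd'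

end ONote
namespace ONote

theorem pnat_succPNat_eq (k : ℕ+) (m : ℕ) (hm : (k : ℕ) = m + 1) : m.succPNat = k := by
  apply PNat.coe_injective
  simp [Nat.succPNat_coe, hm]

theorem fs_add : ∀ (α β : ONote) (f : ℕ → ONote), NF α → NF β →
    repr α + repr β = repr α ♯ repr β →
    fundamentalSequence β = Sum.inr f →
    fundamentalSequence (α + β) = Sum.inr fun i => α + f i := by
  intro α
  induction α with
  | zero => intro β f _ _ _ hfs; exact hfs
  | oadd e n a _ IHa =>
    intro β f hα hβ hnat hfs
    cases β with
    | zero =>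
      exact absurd (show Sum.inl (Option.none (α := ONote)) = Sum.inr f from hfs) Sum.inl_ne_inr
    | oadd eb nb b =>
    have hp := fundamentalSequence_has_prop (oadd eb nb b)
    rw [hfs] at hp
    rcases eq_or_ne a 0 with rfl | ha0
    · -- a = 0
      have hbound : repr (oadd eb nb b) < ω ^ Order.succ (repr e) :=
        repr_lt_of_nadd_eq_add hα (fun h => ONote.noConfusion h) hnat
          (hα.below_of_lt (Order.lt_succ _))
      have hnfeb : NF eb := hβ.fst
      have heb : repr eb ≤ repr e := by
        have h1 : (ω : Ordinal) ^ repr eb ≤ repr (oadd eb nb b) := omega0_le_oadd _ _ _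
        exact Order.lt_succ_iff.1
          ((opow_lt_opow_iff_right one_lt_omega0).1 (lt_of_le_of_lt h1 hbound))
      have hcc := @cmp_compares e eb hα.fst hnfeb
      cases hc : ONote.cmp e eb <;> rw [hc] at hcc
      case lt => exact absurd (lt_def.1 hcc) (not_lt.2 heb)
      case gt =>
        have hblt : NFBelow (oadd eb nb b) (repr e) := hβ.below_of_lt (lt_def.1 hcc)
        have hab : oadd e n 0 + oadd eb nb b = oadd e n (oadd eb nb b) := by
          rw [oadd_add, ONote.zero_add]
          exact addAux_eq_oadd hα.fst n hblt
        rw [hab, fundamentalSequence, hfs]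
        refine congrArg Sum.inr (funext fun i => ?_)
        show oadd e n (f i) = oadd e n 0 + f i
        have hfi : NF (f i) := (hp.2.1 i).2.2 hβ
        have hfilt : repr (f i) < ω ^ repr e :=
          lt_trans (lt_def.1 (hp.2.1 i).2.1) hblt.repr_lt
        rw [oadd_add, ONote.zero_add, addAux_eq_oadd hα.fst n (NF.below_of_lt' hfilt hfi)]
      case eq =>
        obtain rfl : e = eb := hcc
        have hab : oadd e n 0 + oadd e nb b = oadd e (n + nb) b := by
          rw [oadd_add, ONote.zero_add]
          simp only [addAux, cmp_self_eq hα.fst]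
        rw [hab, fundamentalSequence]
        rw [fundamentalSequence] at hfs
        rcases hfsb : fundamentalSequence b with ⟨_ | d⟩ | f0
        · -- fs b = inl none
          have hnpred : (n + nb).natPred = Nat.succ (n.natPred + nb.natPred) := by
            have hA := PNat.natPred_add_one n
            have hB := PNat.natPred_add_one nb
            have hC := PNat.natPred_add_one (n + nb)
            rw [PNat.add_coe] at hC
            omega
          rw [hfsb] at hfs
          show ((match fundamentalSequence e, (n + nb).natPred with
            | Sum.inl none, 0 => Sum.inl (some 0)
            | Sum.inl none, Nat.succ m => Sum.inl (some (oadd 0 m.succPNat 0))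
            | Sum.inl (some a'), 0 => Sum.inr fun i : ℕ => oadd a' i.succPNat 0
            | Sum.inl (some a'), Nat.succ m =>
                Sum.inr fun i : ℕ => oadd e m.succPNat (oadd a' i.succPNat 0)
            | Sum.inr f, 0 => Sum.inr fun i : ℕ => oadd (f i) 1 0
            | Sum.inr f, Nat.succ m =>
                Sum.inr fun i : ℕ => oadd e m.succPNat (oadd (f i) 1 0)) :
              Option ONote ⊕ (ℕ → ONote)) = _
          replace hfs : ((match fundamentalSequence e, nb.natPred with
            | Sum.inl none, 0 => Sum.inl (some 0)
            | Sum.inl none, Nat.succ m => Sum.inl (some (oadd 0 m.succPNat 0))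
            | Sum.inl (some a'), 0 => Sum.inr fun i : ℕ => oadd a' i.succPNat 0
            | Sum.inl (some a'), Nat.succ m =>
                Sum.inr fun i : ℕ => oadd e m.succPNat (oadd a' i.succPNat 0)
            | Sum.inr f, 0 => Sum.inr fun i : ℕ => oadd (f i) 1 0
            | Sum.inr f, Nat.succ m =>
                Sum.inr fun i : ℕ => oadd e m.succPNat (oadd (f i) 1 0)) :
              Option ONote ⊕ (ℕ → ONote)) = Sum.inr f := hfs
          rw [hnpred]
          rcases hfse : fundamentalSequence e with ⟨_ | e'⟩ | g <;>
            rw [hfse] at hfs <;>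
            rcases hnp : nb.natPred with _ | m' <;>
            rw [hnp] at hfs
          · exact absurd hfs Sum.inl_ne_inr
          · exact absurd hfs Sum.inl_ne_inr
          · -- fs e = inl some e', nb = 1
            have hpe := fundamentalSequence_has_prop e; rw [hfse] at hpe
            have hnfe' : NF e' := hpe.2 hα.fst
            haveI := hnfe'
            have he'lt : repr e' < repr e := by rw [hpe.1]; exact Order.lt_succ _
            obtain rfl := Sum.inr.inj hfs
            refine congrArg Sum.inr (funext fun i => ?_)
            show oadd e (n.natPred + 0).succPNat (oadd e' i.succPNat 0) =
              oadd e n 0 + oadd e' i.succPNat 0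
            rw [oadd_add, ONote.zero_add,
              addAux_eq_oadd hα.fst n (NF.below_of_lt he'lt (NF.oadd_zero e' i.succPNat)),
              show (n.natPred + 0).succPNat = n from
                pnat_succPNat_eq n _ (by rw [Nat.add_zero]; exact (PNat.natPred_add_one n).symm)]
          · -- fs e = inl some e', nb = m' + 2
            have hpe := fundamentalSequence_has_prop e; rw [hfse] at hpe
            obtain rfl := Sum.inr.inj hfs
            refine congrArg Sum.inr (funext fun i => ?_)
            show oadd e (n.natPred + (m' + 1)).succPNat (oadd e' i.succPNat 0) =
              oadd e n 0 + oadd e m'.succPNat (oadd e' i.succPNat 0)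
            rw [oadd_add, ONote.zero_add]
            simp only [addAux, cmp_self_eq hα.fst]
            congr 1
            apply PNat.coe_injective
            have hA := PNat.natPred_add_one n
            rw [Nat.succPNat_coe, PNat.add_coe, Nat.succPNat_coe]
            omega
          · -- fs e = inr g, nb = 1
            have hpe := fundamentalSequence_has_prop e; rw [hfse] at hpe
            obtain rfl := Sum.inr.inj hfs
            refine congrArg Sum.inr (funext fun i => ?_)
            have hgi : NF (g i) := (hpe.2.1 i).2.2 hα.fst
            haveI := hgi
            show oadd e (n.natPred + 0).succPNat (oadd (g i) 1 0) =
              oadd e n 0 + oadd (g i) 1 0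
            rw [oadd_add, ONote.zero_add,
              addAux_eq_oadd hα.fst n
                (NF.below_of_lt (lt_def.1 (hpe.2.1 i).2.1) (NF.oadd_zero (g i) 1)),
              show (n.natPred + 0).succPNat = n from
                pnat_succPNat_eq n _ (by rw [Nat.add_zero]; exact (PNat.natPred_add_one n).symm)]
          · -- fs e = inr g, nb = m' + 2
            obtain rfl := Sum.inr.inj hfs
            refine congrArg Sum.inr (funext fun i => ?_)
            show oadd e (n.natPred + (m' + 1)).succPNat (oadd (g i) 1 0) =
              oadd e n 0 + oadd e m'.succPNat (oadd (g i) 1 0)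
            rw [oadd_add, ONote.zero_add]
            simp only [addAux, cmp_self_eq hα.fst]
            congr 1
            apply PNat.coe_injective
            have hA := PNat.natPred_add_one n
            rw [Nat.succPNat_coe, PNat.add_coe, Nat.succPNat_coe]
            omega
        · rw [hfsb] at hfs
          exact absurd hfs Sum.inl_ne_inr
        · rw [hfsb] at hfs
          obtain rfl := Sum.inr.inj hfs
          refine congrArg Sum.inr (funext fun i => ?_)
          show oadd e (n + nb) (f0 i) = oadd e n 0 + oadd e nb (f0 i)
          rw [oadd_add, ONote.zero_add]
          simp only [addAux, cmp_self_eq hα.fst]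
    · -- a ≠ 0
      obtain ⟨hnata, hbe⟩ := tail_facts hα ha0 hnat
      have IH := IHa (oadd eb nb b) f hα.snd hβ hnata hfs
      haveI := hα.snd
      haveI := hβ
      have hrab : repr (a + oadd eb nb b) < ω ^ repr e := by
        rw [repr_add]
        exact Ordinal.principal_add_omega0_opow _ hα.snd'.repr_lt hbe
      have hab : oadd e n a + oadd eb nb b = oadd e n (a + oadd eb nb b) := by
        rw [oadd_add]
        exact addAux_eq_oadd hα.fst n (NF.below_of_lt' hrab (add_nf _ _))
      rw [hab, fundamentalSequence, IH]
      refine congrArg Sum.inr (funext fun i => ?_)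
      show oadd e n (a + f i) = oadd e n a + f i
      have hfi : NF (f i) := (hp.2.1 i).2.2 hβ
      haveI := hfi
      have hfirep : repr (a + f i) < ω ^ repr e := by
        rw [repr_add]
        exact Ordinal.principal_add_omega0_opow _ hα.snd'.repr_lt
          (lt_trans (lt_def.1 (hp.2.1 i).2.1) hbe)
      rw [oadd_add, addAux_eq_oadd hα.fst n (NF.below_of_lt' hfirep (add_nf _ _))]

end ONote

/-- The Hardy hierarchy `h^α`: `h^0(x) = x`, `h^{α+1}(x) = h^α(h(x))`,
`h^λ(x) = h^{λ(x)}(x)`. -/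
def Hardy (h : ℕ → ℕ) : ONote → ℕ → ℕ
  | o =>
    match fundamentalSequence o, fundamentalSequence_has_prop o with
    | Sum.inl none, _ => id
    | Sum.inl (some a), hp =>
      have : a < o := by rw [lt_def, hp.1]; exact Order.lt_succ _
      fun x => Hardy h a (h x)
    | Sum.inr f, hp => fun x =>
      have : f x < o := (hp.2.1 x).2.1
      Hardy h (f x) x
  termination_by o => o

@[nolint unusedHavesSuffices]
theorem Hardy_def {h : ℕ → ℕ} {o : ONote} {x} (e : fundamentalSequence o = x) :
    Hardy h o =
      match (motive := (x : Option ONote ⊕ (ℕ → ONote)) → FundamentalSequenceProp o x → ℕ → ℕ)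
        x, e ▸ fundamentalSequence_has_prop o with
      | Sum.inl none, _ => id
      | Sum.inl (some a), _ => fun i => Hardy h a (h i)
      | Sum.inr f, _ => fun i => Hardy h (f i) i := by
  subst x
  rw [Hardy]

theorem Hardy_none {h : ℕ → ℕ} {o : ONote} (e : fundamentalSequence o = Sum.inl none) (x : ℕ) :
    Hardy h o x = x := by
  rw [Hardy_def e]
  rfl

theorem Hardy_succ {h : ℕ → ℕ} {o a : ONote} (e : fundamentalSequence o = Sum.inl (some a))
    (x : ℕ) : Hardy h o x = Hardy h a (h x) := by
  rw [Hardy_def e]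

theorem Hardy_limit {h : ℕ → ℕ} {o : ONote} {f : ℕ → ONote}
    (e : fundamentalSequence o = Sum.inr f) (x : ℕ) : Hardy h o x = Hardy h (f x) x := by
  rw [Hardy_def e]

theorem hardy_aux (h : ℕ → ℕ) (α : ONote) (hNFα : α.NF) :
    ∀ (R : Ordinal) (β : ONote), β.NF → β.repr = R →
      (α.repr + β.repr = α.repr ♯ β.repr) → ∀ x : ℕ,
      Hardy h (α + β) x = Hardy h α (Hardy h β x) := by
  intro R
  induction R using Ordinal.induction with
  | h R IH =>
  intro β hNFβ hR hnat x
  haveI := hNFα; haveI := hNFβ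
  rcases hfs : fundamentalSequence β with ⟨_ | γ⟩ | f
  · have hp := fundamentalSequence_has_prop β; rw [hfs] at hp
    subst hp
    rw [ONote.add_zero_nf hNFα,
      show Hardy h 0 x = x from Hardy_none (by rfl) x]
  · have hp := fundamentalSequence_has_prop β; rw [hfs] at hp
    have hγNF : ONote.NF γ := hp.2 hNFβ
    haveI := hγNF
    have hsucc : ONote.repr β = Order.succ (ONote.repr γ) := hp.1
    rcases hfs2 : fundamentalSequence (α + β) with ⟨_ | δ⟩ | g
    · have hp2 := fundamentalSequence_has_prop (α + β); rw [hfs2] at hp2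
      exfalso
      have hz : ONote.repr (α + β) = 0 := by rw [hp2]; rfl
      rw [ONote.repr_add, hsucc, Ordinal.add_succ] at hz
      exact (Ordinal.succ_ne_zero _) hz
    · have hp2 := fundamentalSequence_has_prop (α + β); rw [hfs2] at hp2
      have hδNF : ONote.NF δ := hp2.2 (ONote.add_nf α β)
      haveI := hδNF
      have hδ : δ = α + γ := by
        have heq : Order.succ (ONote.repr δ) = Order.succ (ONote.repr (α + γ)) := by
          rw [← hp2.1, ONote.repr_add, ONote.repr_add, hsucc, Ordinal.add_succ]
        exact ONote.repr_inj.1 (Order.succ_eq_succ_iff.1 heq)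
      rw [Hardy_succ hfs2 x, hδ, Hardy_succ hfs x]
      exact IH (ONote.repr γ)
        (by rw [← hR, hsucc]; exact Order.lt_succ _)
        γ hγNF rfl
        (ONote.nadd_eq_add_down' hNFα hnat
          (le_of_lt (by rw [hsucc]; exact Order.lt_succ _)))
        (h x)
    · have hp2 := fundamentalSequence_has_prop (α + β); rw [hfs2] at hp2
      exfalso
      have hl : Order.IsSuccLimit (ONote.repr (α + β)) := hp2.1
      rw [ONote.repr_add, hsucc, Ordinal.add_succ] at hl
      exact lt_irrefl _ (hl.succ_lt (Order.lt_succ _))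
  · rw [Hardy_limit hfs x, Hardy_limit (ONote.fs_add α β f hNFα hNFβ hnat hfs) x]
    have hp := fundamentalSequence_has_prop β; rw [hfs] at hp
    have hfx : ONote.NF (f x) := (hp.2.1 x).2.2 hNFβ
    have hlt : ONote.repr (f x) < ONote.repr β := lt_def.1 (hp.2.1 x).2.1
    exact IH (ONote.repr (f x)) (hR ▸ hlt) (f x) hfx rfl
      (ONote.nadd_eq_add_down' hNFα hnat hlt.le) x

/-- Let `h : ℕ → ℕ` be strictly increasing and `α, β < ε₀` be such that `α + β = α ⊕ β`,
where `⊕` is the natural (Hessenberg) sum.  Then `h^(α+β)(x) = h^α(h^β(x))` for all `x`. -/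
theorem hardy_add_of_nadd_eq_add (h : ℕ → ℕ) (hh : StrictMono h) (α β : ONote)
    (hNFα : α.NF) (hNFβ : β.NF) (hnat : α.repr + β.repr = α.repr ♯ β.repr) (x : ℕ) :
    Hardy h (α + β) x = Hardy h α (Hardy h β x) :=
  hardy_aux h α hNFα (ONote.repr β) β hNFβ rfl hnat x
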